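/- For every positive integer n, the derivative of P_n satisfies lim_{p→0⁺} P_n'(p) = -∞ and lim_{p→1⁻} P_n'(p) = +∞. -/

import Mathlib

open Real Filter Topology

open Set

/-- Generalized binomial coefficient `binom(n, α) = n! / (Γ(α+1)·Γ(n-α+1))`. -/
noncomputable def gbinom (n : ℕ) (a : ℝ) : ℝ :=
  (n.factorial : ℝ) / (Real.Gamma (a + 1) * Real.Gamma ((n : ℝ) - a + 1))

/-- The function `P_n(p) = binom(n, np) · p^(np) · (1-p)^(n(1-p))`. -/
noncomputable def Pn (n : ℕ) (p : ℝ) : ℝ :=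
  gbinom n ((n : ℝ) * p) * p ^ ((n : ℝ) * p) * (1 - p) ^ ((n : ℝ) * (1 - p))

/-- derivative of the real Gamma function, as real part of complex derivative. -/
noncomputable def dgam (x : ℝ) : ℝ := (deriv Complex.Gamma x).re

lemma hasDerivAt_Gamma_dgam {x : ℝ} (hx : 0 < x) : HasDerivAt Real.Gamma (dgam x) x := by
  have hne : ∀ m : ℕ, (x : ℂ) ≠ -m := by
    intro m h
    have h2 : x = -(m : ℝ) := by exact_mod_cast h
    have : (0:ℝ) ≤ (m:ℝ) := m.cast_nonneg
    linarith [h2 ▸ hx]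
  have h := ((Complex.differentiableAt_Gamma _ hne).hasDerivAt).real_of_complex
  simp only [Complex.Gamma_ofReal, Complex.ofReal_re] at h
  exact h

lemma continuousAt_dgam {x : ℝ} (hx : 0 < x) : ContinuousAt dgam x := by
  have hS : IsOpen {z : ℂ | 0 < z.re} := isOpen_lt continuous_const Complex.continuous_re
  have hdiff : DifferentiableOn ℂ Complex.Gamma {z : ℂ | 0 < z.re} := by
    intro z hz
    refine (Complex.differentiableAt_Gamma z fun m => ?_).differentiableWithinAt
    intro h
    rw [h] at hz
    simp only [Set.mem_setOf_eq, Complex.neg_re, Complex.natCast_re] at hz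
    have : (0:ℝ) ≤ (m:ℝ) := m.cast_nonneg
    linarith
  have han := hdiff.analyticOnNhd hS
  have hco : ContinuousOn (deriv Complex.Gamma) {z : ℂ | 0 < z.re} :=
    (han.deriv).continuousOn
  have h1 : ContinuousAt (deriv Complex.Gamma) (x : ℂ) :=
    hco.continuousAt (hS.mem_nhds (by simpa using hx))
  exact Complex.continuous_re.continuousAt.comp
    (h1.comp Complex.continuous_ofReal.continuousAt)

/-- canonical form of the derivative of `Pn` -/
noncomputable def En (n : ℕ) (p : ℝ) : ℝ :=
  Pn n p * ((n : ℝ) * Real.log p - (n : ℝ) * Real.log (1 - p) -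
    ((n : ℝ) * dgam ((n : ℝ) * p + 1) / Real.Gamma ((n : ℝ) * p + 1) -
     (n : ℝ) * dgam ((n : ℝ) - (n : ℝ) * p + 1) / Real.Gamma ((n : ℝ) - (n : ℝ) * p + 1)))

lemma Pn_hasDerivAt (n : ℕ) {p : ℝ} (hp : p ∈ Set.Ioo (0:ℝ) 1) (hn : 0 < n) :
    HasDerivAt (Pn n) (En n p) p := by
  obtain ⟨hp0, hp1⟩ := hp
  have hn' : (0:ℝ) < n := by exact_mod_cast hn
  have h1p : (0:ℝ) < 1 - p := by linarith
  have hx1 : (0:ℝ) < (n:ℝ) * p + 1 := by nlinarith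
  have hx2 : (0:ℝ) < (n:ℝ) - (n:ℝ) * p + 1 := by nlinarith
  have hΓ1 : (0:ℝ) < Real.Gamma ((n:ℝ) * p + 1) := Real.Gamma_pos_of_pos hx1
  have hΓ2 : (0:ℝ) < Real.Gamma ((n:ℝ) - (n:ℝ) * p + 1) := Real.Gamma_pos_of_pos hx2
  -- inner linear functions
  have hlinA : HasDerivAt (fun p : ℝ => (n:ℝ) * p) (n:ℝ) p := by
    simpa using (hasDerivAt_id p).const_mul (n:ℝ)
  have hlin1 : HasDerivAt (fun p : ℝ => (n:ℝ) * p + 1) (n:ℝ) p := hlinA.add_const 1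
  have hlin2 : HasDerivAt (fun p : ℝ => (n:ℝ) - (n:ℝ) * p + 1) (-(n:ℝ)) p := by
    simpa using (hlinA.const_sub (n:ℝ)).add_const 1
  have hlinB : HasDerivAt (fun p : ℝ => (n:ℝ) * (1 - p)) (-(n:ℝ)) p := by
    simpa using ((hasDerivAt_id p).const_sub 1).const_mul (n:ℝ)
  have hG1 : HasDerivAt (fun p : ℝ => Real.Gamma ((n:ℝ) * p + 1))
      (dgam ((n:ℝ) * p + 1) * (n:ℝ)) p :=
    HasDerivAt.comp (h₂ := Real.Gamma) p (hasDerivAt_Gamma_dgam hx1) hlin1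
  have hG2 : HasDerivAt (fun p : ℝ => Real.Gamma ((n:ℝ) - (n:ℝ) * p + 1))
      (dgam ((n:ℝ) - (n:ℝ) * p + 1) * -(n:ℝ)) p :=
    HasDerivAt.comp (h₂ := Real.Gamma) p (hasDerivAt_Gamma_dgam hx2) hlin2
  have hD := hG1.mul hG2
  have hq := (hasDerivAt_const p ((n.factorial : ℝ))).div hD (mul_pos hΓ1 hΓ2).ne'
  have hA : HasDerivAt (fun p : ℝ => p ^ ((n:ℝ) * p))
      (1 * ((n:ℝ) * p) * p ^ ((n:ℝ) * p - 1) + (n:ℝ) * p ^ ((n:ℝ) * p) * Real.log p) p :=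
    (hasDerivAt_id p).rpow hlinA hp0
  have hB : HasDerivAt (fun p : ℝ => (1 - p) ^ ((n:ℝ) * (1 - p)))
      ((-1) * ((n:ℝ) * (1 - p)) * (1 - p) ^ ((n:ℝ) * (1 - p) - 1) +
        (-(n:ℝ)) * (1 - p) ^ ((n:ℝ) * (1 - p)) * Real.log (1 - p)) p :=
    ((hasDerivAt_id p).const_sub 1).rpow hlinB h1p
  have total := (hq.mul hA).mul hB
  have hfun : Pn n = fun p : ℝ => (n.factorial : ℝ) /
      (Real.Gamma ((n:ℝ) * p + 1) * Real.Gamma ((n:ℝ) - (n:ℝ) * p + 1)) *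
      p ^ ((n:ℝ) * p) * (1 - p) ^ ((n:ℝ) * (1 - p)) := by
    funext q; simp [Pn, gbinom]
  rw [hfun]
  refine total.congr_deriv ?_
  rw [Real.rpow_sub_one hp0.ne', Real.rpow_sub_one h1p.ne']
  simp only [En, Pn, gbinom, Pi.mul_apply, Pi.div_apply]
  have hfac : (0:ℝ) < (n.factorial : ℝ) := by positivity
  field_simp
  ring


lemma En_tendsto_atBot (n : ℕ) (hn : 0 < n) : Tendsto (En n) (𝓝[>] (0:ℝ)) atBot := by
  have hn' : (0:ℝ) < n := by exact_mod_cast hn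
  set l := 𝓝[>] (0:ℝ) with hl
  have hc1 : Tendsto (fun p : ℝ => (n:ℝ) * p + 1) l (𝓝 1) := by
    have : Tendsto (fun p : ℝ => (n:ℝ) * p + 1) (𝓝 0) (𝓝 ((n:ℝ) * 0 + 1)) :=
      ((continuous_const.mul continuous_id).add continuous_const).tendsto 0
    simpa using this.mono_left nhdsWithin_le_nhds
  have hc2 : Tendsto (fun p : ℝ => (n:ℝ) - (n:ℝ) * p + 1) l (𝓝 ((n:ℝ) + 1)) := by
    have : Tendsto (fun p : ℝ => (n:ℝ) - (n:ℝ) * p + 1) (𝓝 0)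
        (𝓝 ((n:ℝ) - (n:ℝ) * 0 + 1)) :=
      ((continuous_const.sub (continuous_const.mul continuous_id)).add continuous_const).tendsto 0
    simpa using this.mono_left nhdsWithin_le_nhds
  have hΓ1 : Tendsto (fun p : ℝ => Real.Gamma ((n:ℝ) * p + 1)) l (𝓝 1) := by
    have h := ((hasDerivAt_Gamma_dgam one_pos).differentiableAt.continuousAt.tendsto).comp hc1
    simpa [Real.Gamma_one, Function.comp_def] using h
  have hn1 : (0:ℝ) < (n:ℝ) + 1 := by positivity
  have hΓfact : Real.Gamma ((n:ℝ) + 1) = (n.factorial : ℝ) := by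
    exact_mod_cast Real.Gamma_nat_eq_factorial n
  have hΓ2 : Tendsto (fun p : ℝ => Real.Gamma ((n:ℝ) - (n:ℝ) * p + 1)) l
      (𝓝 (Real.Gamma ((n:ℝ) + 1))) :=
    ((hasDerivAt_Gamma_dgam hn1).differentiableAt.continuousAt.tendsto).comp hc2
  have hdg1 : Tendsto (fun p : ℝ => dgam ((n:ℝ) * p + 1)) l (𝓝 (dgam 1)) :=
    ((continuousAt_dgam one_pos).tendsto).comp hc1
  have hdg2 : Tendsto (fun p : ℝ => dgam ((n:ℝ) - (n:ℝ) * p + 1)) l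
      (𝓝 (dgam ((n:ℝ) + 1))) :=
    ((continuousAt_dgam hn1).tendsto).comp hc2
  have hA1 : Tendsto (fun p : ℝ => p ^ ((n:ℝ) * p)) l (𝓝 1) := by
    have hplog : Tendsto (fun p : ℝ => p * Real.log p) l (𝓝 0) := by
      have h := Real.continuous_mul_log.tendsto 0
      simp only [Real.log_zero, mul_zero] at h
      exact h.mono_left nhdsWithin_le_nhds
    have h2 : Tendsto (fun p : ℝ => Real.log p * ((n:ℝ) * p)) l (𝓝 0) := by
      have h3 := hplog.const_mul (n:ℝ)
      rw [mul_zero] at h3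
      exact h3.congr fun p => by ring
    have hexp : Tendsto (fun p : ℝ => Real.exp (Real.log p * ((n:ℝ) * p))) l (𝓝 1) := by
      simpa [Function.comp_def] using (Real.continuous_exp.tendsto 0).comp h2
    refine hexp.congr' ?_
    filter_upwards [self_mem_nhdsWithin] with p hp
    exact (Real.rpow_def_of_pos hp _).symm
  have hB1 : Tendsto (fun p : ℝ => (1 - p) ^ ((n:ℝ) * (1 - p))) l (𝓝 1) := by
    have hca : ContinuousAt (fun p : ℝ => (1 - p) ^ ((n:ℝ) * (1 - p))) 0 := by
      refine ContinuousAt.rpow (continuousAt_const.sub continuousAt_id)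
        (continuousAt_const.mul (continuousAt_const.sub continuousAt_id)) (Or.inl ?_)
      norm_num
    have h : Tendsto (fun p : ℝ => (1 - p) ^ ((n:ℝ) * (1 - p))) l (𝓝 ((1 - 0) ^ ((n:ℝ) * (1 - 0)))) :=
      hca.tendsto.mono_left nhdsWithin_le_nhds
    simpa using h
  have hlog1p : Tendsto (fun p : ℝ => Real.log (1 - p)) l (𝓝 0) := by
    have hca : ContinuousAt (fun p : ℝ => Real.log (1 - p)) 0 :=
      (Real.continuousAt_log (by norm_num)).comp (continuousAt_const.sub continuousAt_id)
    have h : Tendsto (fun p : ℝ => Real.log (1 - p)) l (𝓝 (Real.log (1 - 0))) :=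
      hca.tendsto.mono_left nhdsWithin_le_nhds
    simpa using h
  have hΓ2ne : Real.Gamma ((n:ℝ) + 1) ≠ 0 := by
    rw [hΓfact]; positivity
  have hq1 : Tendsto (fun p : ℝ => (n.factorial : ℝ) /
      (Real.Gamma ((n:ℝ) * p + 1) * Real.Gamma ((n:ℝ) - (n:ℝ) * p + 1))) l (𝓝 1) := by
    have h := (tendsto_const_nhds : Tendsto (fun _ : ℝ => (n.factorial : ℝ)) l
        (𝓝 (n.factorial : ℝ))).div (hΓ1.mul hΓ2)
      (by rw [one_mul]; exact hΓ2ne : (1:ℝ) * Real.Gamma ((n:ℝ)+1) ≠ 0)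
    have hval : (n.factorial : ℝ) / (1 * Real.Gamma ((n:ℝ) + 1)) = 1 := by
      rw [one_mul, hΓfact, div_self (by positivity)]
    rwa [hval] at h
  have hPn : Tendsto (Pn n) l (𝓝 1) := by
    have h := (hq1.mul hA1).mul hB1
    rw [mul_one, mul_one] at h
    have hfun : Pn n = fun p : ℝ => (n.factorial : ℝ) /
        (Real.Gamma ((n:ℝ) * p + 1) * Real.Gamma ((n:ℝ) - (n:ℝ) * p + 1)) *
        p ^ ((n:ℝ) * p) * (1 - p) ^ ((n:ℝ) * (1 - p)) := by
      funext q; simp [Pn, gbinom]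
    rw [hfun]
    exact h
  have t1 : Tendsto (fun p : ℝ => (n:ℝ) * dgam ((n:ℝ) * p + 1) /
      Real.Gamma ((n:ℝ) * p + 1)) l (𝓝 ((n:ℝ) * dgam 1 / 1)) :=
    ((tendsto_const_nhds : Tendsto (fun _ : ℝ => (n:ℝ)) l (𝓝 (n:ℝ))).mul hdg1).div hΓ1 one_ne_zero
  have t2 : Tendsto (fun p : ℝ => (n:ℝ) * dgam ((n:ℝ) - (n:ℝ) * p + 1) /
      Real.Gamma ((n:ℝ) - (n:ℝ) * p + 1)) l
      (𝓝 ((n:ℝ) * dgam ((n:ℝ) + 1) / Real.Gamma ((n:ℝ) + 1))) :=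
    ((tendsto_const_nhds : Tendsto (fun _ : ℝ => (n:ℝ)) l (𝓝 (n:ℝ))).mul hdg2).div hΓ2 hΓ2ne
  have hconst := hPn.mul ((((tendsto_const_nhds : Tendsto (fun _ : ℝ => (n:ℝ)) l
      (𝓝 (n:ℝ))).mul hlog1p).neg).sub (t1.sub t2))
  have hbot : Tendsto (fun p : ℝ => Pn n p * (n:ℝ) * Real.log p) l atBot := by
    refine Filter.Tendsto.pos_mul_atBot (C := 1 * (n:ℝ)) (by positivity) ?_
      Real.tendsto_log_nhdsGT_zero
    exact hPn.mul (tendsto_const_nhds : Tendsto (fun _ : ℝ => (n:ℝ)) l (𝓝 (n:ℝ)))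
  have hsum := hbot.atBot_add hconst
  refine hsum.congr fun p => ?_
  simp only [En]
  ring

/-- For every positive integer `n`, `lim_{p→0⁺} P_n'(p) = -∞` and `lim_{p→1⁻} P_n'(p) = +∞`. -/
theorem Pn_deriv_boundary_limits (n : ℕ) (hn : 0 < n) :
    Tendsto (deriv (Pn n)) (𝓝[>] (0:ℝ)) atBot ∧
    Tendsto (deriv (Pn n)) (𝓝[<] (1:ℝ)) atTop := by
  have hEbot := En_tendsto_atBot n hn
  constructor
  · refine hEbot.congr' ?_
    filter_upwards [Ioo_mem_nhdsGT_of_mem (by norm_num : (0:ℝ) ∈ Ico (0:ℝ) 1)] with p hp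
    exact ((Pn_hasDerivAt n hp hn).deriv).symm
  · have hsymm : ∀ p : ℝ, Pn n (1 - p) = Pn n p := by
      intro p
      simp only [Pn, gbinom]
      have e2 : (1:ℝ) - (1 - p) = p := by ring
      rw [e2]
      have e3 : (n:ℝ) * (1 - p) = (n:ℝ) - (n:ℝ) * p := by ring
      rw [e3]
      have e4 : (n:ℝ) - ((n:ℝ) - (n:ℝ) * p) = (n:ℝ) * p := by ring
      rw [e4]
      ring
    have hmap : Tendsto (fun p : ℝ => 1 - p) (𝓝[<] (1:ℝ)) (𝓝[>] (0:ℝ)) := by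
      apply tendsto_nhdsWithin_of_tendsto_nhds_of_eventually_within
      · have h : Tendsto (fun p : ℝ => 1 - p) (𝓝 1) (𝓝 (1 - 1)) :=
          (continuous_const.sub continuous_id).tendsto 1
        simpa using h.mono_left nhdsWithin_le_nhds
      · filter_upwards [self_mem_nhdsWithin] with p hp
        simp only [mem_Ioi, sub_pos]
        exact mem_Iio.mp hp
    have hEtop : Tendsto (fun p : ℝ => -(En n (1 - p))) (𝓝[<] (1:ℝ)) atTop := by
      have h := tendsto_neg_atBot_atTop.comp (hEbot.comp hmap)
      exact h
    refine hEtop.congr' ?_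
    filter_upwards [Ioo_mem_nhdsLT_of_mem (by norm_num : (1:ℝ) ∈ Ioc (0:ℝ) 1)] with p hp
    have h1p : 1 - p ∈ Set.Ioo (0:ℝ) 1 := ⟨by linarith [hp.2], by linarith [hp.1]⟩
    have key := Pn_hasDerivAt n h1p hn
    have hcomp := HasDerivAt.comp p key ((hasDerivAt_id p).const_sub 1)
    have hcomp' : HasDerivAt (Pn n) (En n (1 - p) * -1) p := by
      have hfe : (Pn n ∘ fun q : ℝ => 1 - q) = Pn n := funext fun q => hsymm q
      rwa [hfe] at hcomp
    rw [hcomp'.deriv]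
    ring
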